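/- arXiv:2101.06903 — 4 statements merged into one kernel-verified Lean document; each statement's English description precedes it below -/
import Mathlib

section
/- Let (X, d) be a metric space, μ a Borel measure on X, x ∈ X, and n ≥ 1. Assume 0 < μ(B(x,r)) < ∞ for every r > 0 and the volume doubling property at x: μ(B(x,R)) ≤ (R/r)ⁿ μ(B(x,r)) for all 0 < r ≤ R. Then for every σ₀ ∈ (0,2) there is a constant C > 0, depending only on n and σ₀, such that for every σ ∈ [σ₀, 2) and every R > 0, (2−σ) ∫_{X∖{x}} min(R², d(x,z)²) / (μ(B(x, d(x,z))) · d(x,z)^σ) dμ(z) ≤ C R^{2−σ}. -/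
open MeasureTheory Metric

private lemma aux_exp (t : ℝ) (ht0 : 0 < t) (ht2 : t ≤ 2) :
    t * Real.log 2 / 4 ≤ 1 - (2:ℝ) ^ (-t) := by
  have hl2 : 0 < Real.log 2 := Real.log_pos one_lt_two
  have h2 : (2:ℝ) ^ (-t) = Real.exp (-(t * Real.log 2)) := by
    rw [Real.rpow_def_of_pos two_pos]; ring_nf
  set u := t * Real.log 2 with hu
  have hu0 : 0 < u := mul_pos ht0 hl2
  have hu2 : u ≤ 2 * Real.log 2 := by
    have := mul_le_mul_of_nonneg_right ht2 hl2.le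
    linarith
  have key1 : Real.exp (-u) * (1 + u) ≤ 1 := by
    have h := Real.add_one_le_exp u
    have hp := Real.exp_pos u
    rw [Real.exp_neg]
    rw [inv_mul_le_iff₀ hp]
    nlinarith
  have key2 : (1:ℝ)/4 ≤ Real.exp (-u) := by
    have hmono : Real.exp (-(2 * Real.log 2)) ≤ Real.exp (-u) :=
      Real.exp_le_exp.2 (by linarith)
    have : Real.exp (-(2 * Real.log 2)) = 1/4 := by
      rw [show -(2*Real.log 2) = -Real.log 2 + -Real.log 2 by ring, Real.exp_add,
        Real.exp_neg, Real.exp_log two_pos]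
      norm_num
    linarith
  rw [h2]
  nlinarith

private lemma quot_eq' (R σ u v : ℝ) (hR : 0 < R) :
    (R * (2:ℝ)^u)^2 / (R * (2:ℝ)^v)^σ = R^(2-σ) * (2:ℝ)^(2*u - v*σ) := by
  have h2 : (0:ℝ) < 2 := two_pos
  rw [Real.mul_rpow hR.le (Real.rpow_nonneg h2.le _), mul_pow,
    ← Real.rpow_natCast ((2:ℝ)^u) 2, ← Real.rpow_mul h2.le, ← Real.rpow_mul h2.le,
    ← Real.rpow_natCast R 2, mul_div_mul_comm, ← Real.rpow_sub hR, ← Real.rpow_sub h2]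
  norm_num
  congr 1
  ring
  exact Or.inl trivial

private lemma pow_eq_rpow (m : ℕ) (c : ℝ) :
    ((2:ℝ)^(-c))^m = (2:ℝ)^(-(c * m)) := by
  rw [← Real.rpow_natCast ((2:ℝ)^(-c)) m, ← Real.rpow_mul (by norm_num : (0:ℝ) ≤ 2)]
  congr 1
  ring

private lemma branch_nat (R σ σ₀ : ℝ) (hR : 0 < R) (hσ₀ : 0 < σ₀) (h1 : σ₀ ≤ σ)
    (h2 : σ < 2) (m : ℕ) (B : ℝ) (hB0 : 0 ≤ B) (hB : B ≤ R^2) :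
    (2 - σ) * B / (R * (2:ℝ)^(m:ℝ))^σ ≤ 2 * R^(2-σ) * ((2:ℝ)^(-σ₀))^m := by
  have hσ0 : 0 < σ := lt_of_lt_of_le hσ₀ h1
  have hden : 0 < (R * (2:ℝ)^(m:ℝ))^σ :=
    Real.rpow_pos_of_pos (by positivity) σ
  have step1 : (2 - σ) * B / (R * (2:ℝ)^(m:ℝ))^σ
      ≤ 2 * R^2 / (R * (2:ℝ)^(m:ℝ))^σ :=
    (div_le_div_iff_of_pos_right hden).2 (by nlinarith)
  have step2 : R^2 / (R * (2:ℝ)^(m:ℝ))^σ = R^(2-σ) * (2:ℝ)^(-((m:ℝ)*σ)) := by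
    have := quot_eq' R σ 0 (m:ℝ) hR
    rw [Real.rpow_zero, mul_one] at this
    rw [this]
    norm_num
  have step3 : (2:ℝ)^(-((m:ℝ)*σ)) ≤ (2:ℝ)^(-(σ₀*(m:ℝ))) := by
    apply Real.rpow_le_rpow_of_exponent_le one_le_two
    have : σ₀ * (m:ℝ) ≤ (m:ℝ) * σ := by
      rcases Nat.eq_zero_or_pos m with h | h
      · simp [h]
      · have hm : (0:ℝ) ≤ (m:ℝ) := Nat.cast_nonneg m
        nlinarith
    linarith
  calc (2 - σ) * B / (R * (2:ℝ)^(m:ℝ))^σ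
      ≤ 2 * R^2 / (R * (2:ℝ)^(m:ℝ))^σ := step1
    _ = 2 * (R^2 / (R * (2:ℝ)^(m:ℝ))^σ) := by ring
    _ = 2 * (R^(2-σ) * (2:ℝ)^(-((m:ℝ)*σ))) := by rw [step2]
    _ ≤ 2 * (R^(2-σ) * (2:ℝ)^(-(σ₀*(m:ℝ)))) :=
        mul_le_mul_of_nonneg_left
          (mul_le_mul_of_nonneg_left step3 (Real.rpow_pos_of_pos hR _).le) (by norm_num)
    _ = 2 * R^(2-σ) * ((2:ℝ)^(-σ₀))^m := by
        rw [pow_eq_rpow m σ₀]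
        ring

private lemma branch_neg (R σ : ℝ) (hR : 0 < R) (hσ0 : 0 < σ) (h2 : σ < 2) (m : ℕ)
    (B : ℝ) (hB0 : 0 ≤ B) (hB : B ≤ (R * (2:ℝ)^(-(m:ℝ)))^2) :
    (2 - σ) * B / (R * (2:ℝ)^(-(m:ℝ)-1))^σ
      ≤ 4 * (2-σ) * R^(2-σ) * ((2:ℝ)^(-(2-σ)))^m := by
  have hden : 0 < (R * (2:ℝ)^(-(m:ℝ)-1))^σ :=
    Real.rpow_pos_of_pos (by positivity) σ
  have step1 : (2 - σ) * B / (R * (2:ℝ)^(-(m:ℝ)-1))^σ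
      ≤ (2 - σ) * (R * (2:ℝ)^(-(m:ℝ)))^2 / (R * (2:ℝ)^(-(m:ℝ)-1))^σ :=
    (div_le_div_iff_of_pos_right hden).2 (mul_le_mul_of_nonneg_left hB (by linarith))
  have step2 : (R * (2:ℝ)^(-(m:ℝ)))^2 / (R * (2:ℝ)^(-(m:ℝ)-1))^σ
      = R^(2-σ) * (2:ℝ)^(2*(-(m:ℝ)) - (-(m:ℝ)-1)*σ) := quot_eq' R σ _ _ hR
  have step3 : (2:ℝ)^(2*(-(m:ℝ)) - (-(m:ℝ)-1)*σ) ≤ 4 * ((2:ℝ)^(-(2-σ)))^m := by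
    rw [pow_eq_rpow m (2-σ)]
    have e4 : (4:ℝ) = (2:ℝ)^(2:ℝ) := by
      rw [show (2:ℝ) = ((2:ℕ):ℝ) by norm_num, Real.rpow_natCast]; norm_num
    rw [e4, ← Real.rpow_add two_pos]
    apply Real.rpow_le_rpow_of_exponent_le one_le_two
    have hm : (0:ℝ) ≤ (m:ℝ) := Nat.cast_nonneg m
    nlinarith
  calc (2 - σ) * B / (R * (2:ℝ)^(-(m:ℝ)-1))^σ
      ≤ (2 - σ) * (R * (2:ℝ)^(-(m:ℝ)))^2 / (R * (2:ℝ)^(-(m:ℝ)-1))^σ := step1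
    _ = (2 - σ) * (R^(2-σ) * (2:ℝ)^(2*(-(m:ℝ)) - (-(m:ℝ)-1)*σ)) := by
        rw [mul_div_assoc, step2]
    _ ≤ (2 - σ) * (R^(2-σ) * (4 * ((2:ℝ)^(-(2-σ)))^m)) :=
        mul_le_mul_of_nonneg_left
          (mul_le_mul_of_nonneg_left step3 (Real.rpow_pos_of_pos hR _).le) (by linarith)
    _ = 4 * (2-σ) * R^(2-σ) * ((2:ℝ)^(-(2-σ)))^m := by ring

private lemma geom_sum_bound (q c : ℝ) (hq0 : 0 ≤ q) (hq1 : q < 1) (hc : 0 ≤ c)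
    (b : ℕ → ℝ) (hb : ∀ m, b m ≤ c * q ^ m) :
    ∑' m : ℕ, ENNReal.ofReal (b m) ≤ ENNReal.ofReal (c * (1 - q)⁻¹) := by
  have h1q : 0 < 1 - q := by linarith
  calc ∑' m : ℕ, ENNReal.ofReal (b m)
      ≤ ∑' m : ℕ, ENNReal.ofReal c * (ENNReal.ofReal q) ^ m := by
        apply ENNReal.tsum_le_tsum
        intro m
        rw [← ENNReal.ofReal_pow hq0, ← ENNReal.ofReal_mul hc]
        exact ENNReal.ofReal_le_ofReal (hb m)
    _ = ENNReal.ofReal c * (1 - ENNReal.ofReal q)⁻¹ := by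
        rw [ENNReal.tsum_mul_left, ENNReal.tsum_geometric]
    _ = ENNReal.ofReal (c * (1 - q)⁻¹) := by
        rw [← ENNReal.ofReal_one, ← ENNReal.ofReal_sub _ hq0,
          ← ENNReal.ofReal_inv_of_pos h1q,
          ← ENNReal.ofReal_mul hc]

private lemma tsum_bound (σ₀ σ R : ℝ) (hσ₀0 : 0 < σ₀) (hσ₁ : σ₀ ≤ σ) (hσ₂ : σ < 2)
    (hR : 0 < R) (a : ℤ → ℝ)
    (hnat : ∀ m : ℕ, a m ≤ 2 * R^(2-σ) * ((2:ℝ)^(-σ₀))^m)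
    (hneg : ∀ m : ℕ, a (-(m+1)) ≤ 4*(2-σ) * R^(2-σ) * ((2:ℝ)^(-(2-σ)))^m) :
    ∑' k : ℤ, ENNReal.ofReal (a k)
      ≤ ENNReal.ofReal ((2/(1-(2:ℝ)^(-σ₀)) + 16/Real.log 2) * R^(2-σ)) := by
  have hl2 : 0 < Real.log 2 := Real.log_pos one_lt_two
  have hRp : 0 < R^(2-σ) := Real.rpow_pos_of_pos hR _
  have ht0 : 0 < 2 - σ := by linarith
  have hq₁0 : 0 ≤ (2:ℝ)^(-σ₀) := Real.rpow_nonneg (by norm_num) _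
  have hq₁1 : (2:ℝ)^(-σ₀) < 1 :=
    Real.rpow_lt_one_of_one_lt_of_neg one_lt_two (by linarith)
  have hq₂0 : 0 ≤ (2:ℝ)^(-(2-σ)) := Real.rpow_nonneg (by norm_num) _
  have hq₂1 : (2:ℝ)^(-(2-σ)) < 1 :=
    Real.rpow_lt_one_of_one_lt_of_neg one_lt_two (by linarith)
  have haux := aux_exp (2-σ) ht0 (by linarith)
  have hD : 0 < 1 - (2:ℝ)^(-(2-σ)) := by linarith
  have hD1 : 0 < 1 - (2:ℝ)^(-σ₀) := by linarith
  have key : 4*(2-σ) * R^(2-σ) * (1 - (2:ℝ)^(-(2-σ)))⁻¹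
      ≤ 16/Real.log 2 * R^(2-σ) := by
    have h1 : 4*(2-σ) * (1 - (2:ℝ)^(-(2-σ)))⁻¹ ≤ 16/Real.log 2 := by
      rw [← div_eq_mul_inv, div_le_div_iff₀ hD hl2]
      nlinarith
    calc 4*(2-σ) * R^(2-σ) * (1 - (2:ℝ)^(-(2-σ)))⁻¹
        = (4*(2-σ) * (1 - (2:ℝ)^(-(2-σ)))⁻¹) * R^(2-σ) := by ring
      _ ≤ 16/Real.log 2 * R^(2-σ) := by
          apply mul_le_mul_of_nonneg_right h1 hRp.le
  rw [tsum_of_nat_of_neg_add_one ENNReal.summable ENNReal.summable]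
  calc (∑' m : ℕ, ENNReal.ofReal (a m)) + ∑' m : ℕ, ENNReal.ofReal (a (-(m+1)))
      ≤ ENNReal.ofReal (2 * R^(2-σ) * (1-(2:ℝ)^(-σ₀))⁻¹)
        + ENNReal.ofReal (4*(2-σ) * R^(2-σ) * (1-(2:ℝ)^(-(2-σ)))⁻¹) := by
        gcongr
        · exact geom_sum_bound _ _ hq₁0 hq₁1 (by positivity) _ hnat
        · exact geom_sum_bound _ _ hq₂0 hq₂1 (by positivity) _ hneg
    _ ≤ ENNReal.ofReal ((2/(1-(2:ℝ)^(-σ₀)) + 16/Real.log 2) * R^(2-σ)) := by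
        rw [← ENNReal.ofReal_add (by positivity) (by positivity)]
        apply ENNReal.ofReal_le_ofReal
        have h2 : 2 * R^(2-σ) * (1-(2:ℝ)^(-σ₀))⁻¹
            = 2/(1-(2:ℝ)^(-σ₀)) * R^(2-σ) := by
          field_simp
        rw [h2]
        nlinarith [key]

/-- **Integrability of the kernels** (Lemma 2.2 of the paper): on a metric measure space
satisfying the volume doubling property at `x` with exponent `n`, for every `σ₀ ∈ (0,2)`
there is `C = C(n,σ₀) > 0` such that for all `σ ∈ [σ₀,2)` and `R > 0`,
`(2−σ) ∫ min(R², d(x,z)²)/(μ(B(x,d(x,z))) d(x,z)^σ) dμ(z) ≤ C R^{2−σ}`. -/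
theorem kernel_integrability {X : Type*} [MetricSpace X] [MeasurableSpace X] [BorelSpace X]
    (μ : Measure X) (x : X) (n : ℕ) (hn : 1 ≤ n)
    (hpos : ∀ r : ℝ, 0 < r → 0 < μ (ball x r) ∧ μ (ball x r) < ⊤)
    (hdoub : ∀ r R : ℝ, 0 < r → r ≤ R →
      μ (ball x R) ≤ ENNReal.ofReal ((R / r) ^ n) * μ (ball x r))
    (σ₀ : ℝ) (hσ₀ : σ₀ ∈ Set.Ioo (0 : ℝ) 2) :
    ∃ C > 0, ∀ σ ∈ Set.Ico σ₀ (2 : ℝ), ∀ R : ℝ, 0 < R →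
      ∫⁻ z in {x}ᶜ,
          ENNReal.ofReal ((2 - σ) * min (R ^ 2) (dist x z ^ 2) / dist x z ^ σ) /
            μ (ball x (dist x z)) ∂μ
        ≤ ENNReal.ofReal (C * R ^ (2 - σ)) := by
  obtain ⟨hσ₀0, hσ₀2⟩ := hσ₀
  have hl2 : 0 < Real.log 2 := Real.log_pos one_lt_two
  have hq₁1 : (2:ℝ)^(-σ₀) < 1 :=
    Real.rpow_lt_one_of_one_lt_of_neg one_lt_two (by linarith)
  have hD1 : 0 < 1 - (2:ℝ)^(-σ₀) := by linarith
  refine ⟨(2:ℝ)^n * (2/(1-(2:ℝ)^(-σ₀)) + 16/Real.log 2), by positivity, ?_⟩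
  rintro σ ⟨hσ₁, hσ₂⟩ R hR
  have hσ0 : 0 < σ := lt_of_lt_of_le hσ₀0 hσ₁
  -- the annuli
  set r : ℤ → ℝ := fun k => R * (2:ℝ) ^ (k:ℝ) with hr_def
  have hrpos : ∀ k, 0 < r k := fun k => mul_pos hR (Real.rpow_pos_of_pos two_pos _)
  have hrmono : Monotone r := by
    intro j k hjk
    exact mul_le_mul_of_nonneg_left
      (Real.rpow_le_rpow_of_exponent_le one_le_two (by exact_mod_cast hjk)) hR.le
  have hrr : ∀ k, r (k+1) = 2 * r k := by
    intro k
    simp only [hr_def]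
    push_cast
    rw [Real.rpow_add two_pos (k:ℝ) 1, Real.rpow_one]
    ring
  set A : ℤ → Set X := fun k => {z | dist x z ∈ Set.Ico (r k) (r (k+1))} with hA_def
  have hmeasA : ∀ k, MeasurableSet (A k) :=
    fun k => (continuous_const.dist continuous_id).measurable measurableSet_Ico
  have hdisj : Pairwise (Function.onFun Disjoint A) := by
    apply (pairwise_disjoint_on A).2
    intro j k hjk
    apply Set.disjoint_left.2
    rintro z ⟨hz1, hz2⟩ ⟨hz3, hz4⟩
    have : r (j+1) ≤ r k := hrmono (by omega)
    simp only [Set.mem_Ico] at *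
    linarith
  have hunion : ⋃ k, A k = {x}ᶜ := by
    ext z
    simp only [Set.mem_iUnion, Set.mem_compl_iff, Set.mem_singleton_iff, hA_def,
      Set.mem_setOf_eq, Set.mem_Ico]
    constructor
    · rintro ⟨k, h1, -⟩ hzx
      rw [hzx, dist_self] at h1
      exact absurd h1 (not_le.2 (hrpos k))
    · intro hz
      have hd : 0 < dist x z := dist_pos.2 (fun h => hz (h.symm))
      refine ⟨Int.log 2 (dist x z / R), ?_, ?_⟩
      · have h := Int.zpow_log_le_self (b := 2) (by norm_num) (div_pos hd hR)
        have h' : (2:ℝ) ^ ((Int.log 2 (dist x z / R) : ℤ) : ℝ) ≤ dist x z / R := by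
          rw [Real.rpow_intCast]
          exact_mod_cast h
        calc r (Int.log 2 (dist x z / R)) = R * (2:ℝ)^((Int.log 2 (dist x z / R) : ℤ):ℝ) := rfl
          _ ≤ R * (dist x z / R) := mul_le_mul_of_nonneg_left h' hR.le
          _ = dist x z := by field_simp
      · have h := Int.lt_zpow_succ_log_self (b := 2) (by norm_num) (dist x z / R)
        have h' : dist x z / R < (2:ℝ) ^ (((Int.log 2 (dist x z / R) + 1 : ℤ)) : ℝ) := by
          rw [Real.rpow_intCast]
          exact_mod_cast h
        calc dist x z = R * (dist x z / R) := by field_simp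
          _ < R * (2:ℝ)^(((Int.log 2 (dist x z / R) + 1 : ℤ)):ℝ) := by
              apply (mul_lt_mul_iff_right₀ hR).2 h'
          _ = r (Int.log 2 (dist x z / R) + 1) := rfl
  -- the per-annulus constant
  set a : ℤ → ℝ := fun k => (2 - σ) * min (R^2) ((r (k+1))^2) / (r k)^σ with ha_def
  have ha0 : ∀ k, 0 ≤ a k := by
    intro k
    apply div_nonneg _ (Real.rpow_nonneg (hrpos k).le σ)
    exact mul_nonneg (by linarith) (le_min (by positivity) (by positivity))
  -- per-annulus estimate
  have hann : ∀ k, (∫⁻ z in A k,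
      ENNReal.ofReal ((2 - σ) * min (R ^ 2) (dist x z ^ 2) / dist x z ^ σ) /
        μ (ball x (dist x z)) ∂μ)
      ≤ ENNReal.ofReal ((2:ℝ)^n) * ENNReal.ofReal (a k) := by
    intro k
    obtain ⟨hM0, hMtop⟩ := hpos (r k) (hrpos k)
    have hptwise : ∀ z ∈ A k,
        ENNReal.ofReal ((2 - σ) * min (R ^ 2) (dist x z ^ 2) / dist x z ^ σ) /
          μ (ball x (dist x z))
        ≤ ENNReal.ofReal (a k) / μ (ball x (r k)) := by
      rintro z ⟨hd1, hd2⟩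
      apply ENNReal.div_le_div _ (measure_mono (ball_subset_ball hd1))
      apply ENNReal.ofReal_le_ofReal
      apply div_le_div₀
        (mul_nonneg (by linarith) (le_min (by positivity) (by positivity)))
        (mul_le_mul_of_nonneg_left
          (min_le_min le_rfl (pow_le_pow_left₀ dist_nonneg hd2.le 2)) (by linarith))
        (Real.rpow_pos_of_pos (hrpos k) σ)
        (Real.rpow_le_rpow (hrpos k).le hd1 hσ0.le)
    have hmeas_ball : μ (A k) ≤ ENNReal.ofReal ((2:ℝ)^n) * μ (ball x (r k)) := by
      have hsub : A k ⊆ ball x (r (k+1)) := by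
        rintro z ⟨-, hz2⟩
        exact mem_ball'.2 hz2
      have hle : r k ≤ r (k+1) := hrmono (by omega)
      have hratio : (r (k+1) / r k) = 2 := by
        rw [hrr k, mul_div_assoc, div_self (hrpos k).ne', mul_one]
      calc μ (A k) ≤ μ (ball x (r (k+1))) := measure_mono hsub
        _ ≤ ENNReal.ofReal ((r (k+1) / r k)^n) * μ (ball x (r k)) :=
            hdoub (r k) (r (k+1)) (hrpos k) hle
        _ = ENNReal.ofReal ((2:ℝ)^n) * μ (ball x (r k)) := by rw [hratio]
    calc (∫⁻ z in A k,
        ENNReal.ofReal ((2 - σ) * min (R ^ 2) (dist x z ^ 2) / dist x z ^ σ) /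
          μ (ball x (dist x z)) ∂μ)
        ≤ ∫⁻ _ in A k, ENNReal.ofReal (a k) / μ (ball x (r k)) ∂μ :=
          setLIntegral_mono' (hmeasA k) hptwise
      _ = ENNReal.ofReal (a k) / μ (ball x (r k)) * μ (A k) := setLIntegral_const _ _
      _ ≤ ENNReal.ofReal (a k) / μ (ball x (r k)) *
            (ENNReal.ofReal ((2:ℝ)^n) * μ (ball x (r k))) :=
          mul_le_mul_right hmeas_ball _
      _ = ENNReal.ofReal ((2:ℝ)^n) *
            (ENNReal.ofReal (a k) / μ (ball x (r k)) * μ (ball x (r k))) := by ring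
      _ = ENNReal.ofReal ((2:ℝ)^n) * ENNReal.ofReal (a k) := by
          rw [ENNReal.div_mul_cancel hM0.ne' hMtop.ne]
  -- bounds for a
  have hnat : ∀ m : ℕ, a m ≤ 2 * R^(2-σ) * ((2:ℝ)^(-σ₀))^m := by
    intro m
    have e1 : r (m:ℤ) = R * (2:ℝ)^(m:ℝ) := by
      simp only [hr_def]
      norm_cast
    have : a m = (2 - σ) * min (R^2) ((r ((m:ℤ)+1))^2) / (R * (2:ℝ)^(m:ℝ))^σ := by
      rw [ha_def]
      simp only [e1]
    rw [this]
    exact branch_nat R σ σ₀ hR hσ₀0 hσ₁ hσ₂ m _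
      (le_min (by positivity) (by positivity)) (min_le_left _ _)
  have hneg : ∀ m : ℕ, a (-(m+1)) ≤ 4*(2-σ) * R^(2-σ) * ((2:ℝ)^(-(2-σ)))^m := by
    intro m
    have e1 : r (-(m+1) : ℤ) = R * (2:ℝ)^(-(m:ℝ)-1) := by
      simp only [hr_def]
      rw [show ((-((m:ℤ)+1) : ℤ) : ℝ) = -(m:ℝ)-1 by push_cast; ring]
    have e2 : r ((-(m+1) : ℤ)+1) = R * (2:ℝ)^(-(m:ℝ)) := by
      simp only [hr_def]
      rw [show (((-((m:ℤ)+1) : ℤ) + 1 : ℤ) : ℝ) = -(m:ℝ) by push_cast; ring]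
    have : a (-(m+1)) = (2 - σ) * min (R^2) ((R * (2:ℝ)^(-(m:ℝ)))^2) /
        (R * (2:ℝ)^(-(m:ℝ)-1))^σ := by
      rw [ha_def]
      simp only [e1, e2]
    rw [this]
    exact branch_neg R σ hR hσ0 hσ₂ m _
      (le_min (by positivity) (by positivity)) (min_le_right _ _)
  -- put everything together
  calc ∫⁻ z in {x}ᶜ,
        ENNReal.ofReal ((2 - σ) * min (R ^ 2) (dist x z ^ 2) / dist x z ^ σ) /
          μ (ball x (dist x z)) ∂μ
      = ∑' k : ℤ, ∫⁻ z in A k,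
          ENNReal.ofReal ((2 - σ) * min (R ^ 2) (dist x z ^ 2) / dist x z ^ σ) /
            μ (ball x (dist x z)) ∂μ := by
        rw [← hunion, lintegral_iUnion hmeasA hdisj]
    _ ≤ ∑' k : ℤ, ENNReal.ofReal ((2:ℝ)^n) * ENNReal.ofReal (a k) :=
        ENNReal.tsum_le_tsum hann
    _ = ENNReal.ofReal ((2:ℝ)^n) * ∑' k : ℤ, ENNReal.ofReal (a k) :=
        ENNReal.tsum_mul_left
    _ ≤ ENNReal.ofReal ((2:ℝ)^n) *
          ENNReal.ofReal ((2/(1-(2:ℝ)^(-σ₀)) + 16/Real.log 2) * R^(2-σ)) :=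
        mul_le_mul_right (tsum_bound σ₀ σ R hσ₀0 hσ₁ hσ₂ hR a hnat hneg) _
    _ = ENNReal.ofReal ((2:ℝ)^n * (2/(1-(2:ℝ)^(-σ₀)) + 16/Real.log 2) * R^(2-σ)) := by
        rw [← ENNReal.ofReal_mul (by positivity), mul_assoc]
end

section
/- Let (X, d) be a metric space, μ a Borel measure on X, x ∈ X, and n ≥ 1. Assume 0 < μ(B(x,r)) < ∞ for every r > 0 and the volume doubling property at x: μ(B(x,R)) ≤ (R/r)ⁿ μ(B(x,r)) for all 0 < r ≤ R. Then for every σ ∈ (0,2) and every R > 0, ∫_{B(x,R)∖{x}} (2−σ) d(x,z)^{2−σ} / μ(B(x, d(x,z))) dμ(z) ≤ 2ⁿ · (2−σ)/(1 − 2^{−(2−σ)}) · R^{2−σ}; in particular the left-hand side is at most C(n) R^{2−σ} for a constant C(n) depending only on n. -/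
open MeasureTheory Metric

/-- **Near-field kernel estimate** (estimate (B_R) inside Lemma 2.2 of the paper): on a
metric measure space with the doubling property at `x` with exponent `n`, for every
`σ ∈ (0,2)` and `R > 0`,
`∫_{B(x,R)∖{x}} (2−σ) d(x,z)^{2−σ}/μ(B(x,d(x,z))) dμ(z) ≤ 2ⁿ (2−σ)/(1−2^{−(2−σ)}) R^{2−σ}`. -/
theorem kernel_nearfield {X : Type*} [MetricSpace X] [MeasurableSpace X] [BorelSpace X]
    (μ : Measure X) (x : X) (n : ℕ) (hn : 1 ≤ n)
    (hpos : ∀ r : ℝ, 0 < r → 0 < μ (ball x r) ∧ μ (ball x r) < ⊤)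
    (hdoub : ∀ r R : ℝ, 0 < r → r ≤ R →
      μ (ball x R) ≤ ENNReal.ofReal ((R / r) ^ n) * μ (ball x r))
    (σ : ℝ) (hσ : σ ∈ Set.Ioo (0 : ℝ) 2) (R : ℝ) (hR : 0 < R) :
    ∫⁻ z in ball x R \ {x},
        ENNReal.ofReal ((2 - σ) * dist x z ^ (2 - σ)) / μ (ball x (dist x z)) ∂μ
      ≤ ENNReal.ofReal (2 ^ n * ((2 - σ) / (1 - 2 ^ (-(2 - σ)))) * R ^ (2 - σ)) := by
  obtain ⟨hσ0, hσ2⟩ := hσ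
  set s : ℝ := 2 - σ with hs_def
  have hs : 0 < s := by simp only [hs_def]; linarith
  -- dyadic radii
  set r : ℕ → ℝ := fun k => R / 2 ^ k with hr_def
  have hrpos : ∀ k, 0 < r k := fun k => div_pos hR (by positivity)
  have hrmono : ∀ k, r (k + 1) ≤ r k := by
    intro k
    apply div_le_div_of_nonneg_left hR.le (by positivity)
    exact pow_le_pow_right₀ (by norm_num) (Nat.le_succ k)
  -- the annuli
  set A : ℕ → Set X := fun k => ball x (r k) \ ball x (r (k + 1)) with hA_def
  have hAmeas : ∀ k, MeasurableSet (A k) :=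
    fun k => measurableSet_ball.diff measurableSet_ball
  -- coverage
  have hcov : ball x R \ {x} ⊆ ⋃ k, A k := by
    intro z hz
    have hzx : z ≠ x := hz.2
    have hd0 : 0 < dist z x := dist_pos.mpr hzx
    have hdR : dist z x < R := mem_ball.mp hz.1
    have hex : ∃ m, r m ≤ dist z x := by
      obtain ⟨m, hm⟩ := exists_pow_lt_of_lt_one (div_pos hd0 hR) (by norm_num : (1/2 : ℝ) < 1)
      refine ⟨m, ?_⟩
      have h1 : R * (1/2 : ℝ) ^ m < dist z x := by
        rw [lt_div_iff₀ hR, mul_comm] at hm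
        exact hm
      have h2 : r m = R * (1/2 : ℝ) ^ m := by
        simp [hr_def, div_eq_mul_inv]
      rw [h2]
      exact h1.le
    set m := Nat.find hex with hm_def
    have hm0 : m ≠ 0 := by
      intro h
      have hsp := Nat.find_spec hex
      rw [← hm_def, h] at hsp
      simp only [hr_def, pow_zero, div_one] at hsp
      linarith
    obtain ⟨k, hk⟩ := Nat.exists_eq_succ_of_ne_zero hm0
    refine Set.mem_iUnion.mpr ⟨k, ?_, ?_⟩
    · have hlt : ¬ r k ≤ dist z x := Nat.find_min hex (by omega)
      exact mem_ball.mpr (lt_of_not_ge hlt)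
    · intro hmem
      have h1 : dist z x < r (k + 1) := mem_ball.mp hmem
      have h2 : r (k + 1) ≤ dist z x := by
        have hsp := Nat.find_spec hex
        rwa [← hm_def, hk] at hsp
      linarith
  -- main chain
  calc ∫⁻ z in ball x R \ {x},
        ENNReal.ofReal ((2 - σ) * dist x z ^ (2 - σ)) / μ (ball x (dist x z)) ∂μ
      ≤ ∫⁻ z in ⋃ k, A k,
        ENNReal.ofReal ((2 - σ) * dist x z ^ (2 - σ)) / μ (ball x (dist x z)) ∂μ :=
        lintegral_mono_set hcov
    _ ≤ ∑' k, ∫⁻ z in A k,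
        ENNReal.ofReal ((2 - σ) * dist x z ^ (2 - σ)) / μ (ball x (dist x z)) ∂μ :=
        lintegral_iUnion_le _ _
    _ ≤ ∑' k, ENNReal.ofReal (2 ^ n) * ENNReal.ofReal ((2 - σ) * r k ^ s) := by
        apply ENNReal.tsum_le_tsum
        intro k
        set b := μ (ball x (r (k + 1))) with hb_def
        have hb0 : b ≠ 0 := (hpos _ (hrpos (k+1))).1.ne'
        have hbt : b ≠ ⊤ := (hpos _ (hrpos (k+1))).2.ne
        set C : ENNReal := ENNReal.ofReal ((2 - σ) * r k ^ s) / b with hC_def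
        have step1 : ∫⁻ z in A k,
            ENNReal.ofReal ((2 - σ) * dist x z ^ (2 - σ)) / μ (ball x (dist x z)) ∂μ
            ≤ C * μ (A k) := by
          rw [← setLIntegral_const]
          apply setLIntegral_mono' (hAmeas k)
          intro z hz
          have hd1 : dist x z < r k := by rw [dist_comm]; exact mem_ball.mp hz.1
          have hd2 : r (k + 1) ≤ dist x z := by
            rw [dist_comm]
            exact le_of_not_gt (fun h => hz.2 (mem_ball.mpr h))
          apply ENNReal.div_le_div
          · apply ENNReal.ofReal_le_ofReal
            apply mul_le_mul_of_nonneg_left _ (by linarith)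
            exact Real.rpow_le_rpow dist_nonneg hd1.le hs.le
          · exact measure_mono (ball_subset_ball hd2)
        have step2 : μ (A k) ≤ ENNReal.ofReal (2 ^ n) * b := by
          calc μ (A k) ≤ μ (ball x (r k)) := measure_mono Set.diff_subset
            _ ≤ ENNReal.ofReal ((r k / r (k + 1)) ^ n) * b :=
                hdoub _ _ (hrpos (k+1)) (hrmono k)
            _ = ENNReal.ofReal (2 ^ n) * b := by
                congr 2
                have hratio : r k / r (k + 1) = 2 := by
                  rw [hr_def]
                  have h2k : (2 : ℝ) ^ k ≠ 0 := by positivity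
                  field_simp
                  ring
                rw [hratio]
        calc ∫⁻ z in A k,
            ENNReal.ofReal ((2 - σ) * dist x z ^ (2 - σ)) / μ (ball x (dist x z)) ∂μ
            ≤ C * μ (A k) := step1
          _ ≤ C * (ENNReal.ofReal (2 ^ n) * b) := mul_le_mul_right step2 C
          _ = ENNReal.ofReal (2 ^ n) * ENNReal.ofReal ((2 - σ) * r k ^ s) := by
              rw [hC_def, mul_comm (ENNReal.ofReal ((2:ℝ)^n)) b, ← mul_assoc,
                ENNReal.div_mul_cancel hb0 hbt, mul_comm]
    _ = ENNReal.ofReal (2 ^ n * ((2 - σ) / (1 - 2 ^ (-(2 - σ)))) * R ^ (2 - σ)) := by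
        set q : ℝ := (2 : ℝ) ^ (-s) with hq_def
        have hq0 : 0 < q := Real.rpow_pos_of_pos (by norm_num) _
        have hq1 : q < 1 :=
          Real.rpow_lt_one_of_one_lt_of_neg (by norm_num) (by linarith)
        have hrk : ∀ k : ℕ, r k ^ s = R ^ s * q ^ k := by
          intro k
          rw [hr_def]
          rw [Real.div_rpow hR.le (by positivity)]
          have h2k : ((2 : ℝ) ^ k) ^ s = ((2 : ℝ) ^ s) ^ k := by
            rw [← Real.rpow_natCast ((2:ℝ)^s) k, ← Real.rpow_natCast (2:ℝ) k,
              ← Real.rpow_mul (by norm_num), ← Real.rpow_mul (by norm_num), mul_comm]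
          rw [h2k, div_eq_mul_inv, ← inv_pow, hq_def]
          congr 2
          rw [← Real.rpow_neg (by norm_num : (0:ℝ) ≤ 2)]
        have hterm : ∀ k : ℕ, ENNReal.ofReal (2 ^ n) * ENNReal.ofReal ((2 - σ) * r k ^ s)
            = (ENNReal.ofReal (2 ^ n) * ENNReal.ofReal (2 - σ) * ENNReal.ofReal (R ^ s))
              * (ENNReal.ofReal q) ^ k := by
          intro k
          rw [hrk k, ENNReal.ofReal_mul (by linarith), ENNReal.ofReal_mul (by positivity),
            ENNReal.ofReal_pow hq0.le]
          ring
        rw [tsum_congr hterm, ENNReal.tsum_mul_left, ENNReal.tsum_geometric]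
        have hinv : (1 - ENNReal.ofReal q)⁻¹ = ENNReal.ofReal ((1 - q)⁻¹) := by
          rw [← ENNReal.ofReal_one, ← ENNReal.ofReal_sub _ hq0.le,
            ENNReal.ofReal_inv_of_pos (by linarith)]
        rw [hinv, ← ENNReal.ofReal_mul (by positivity), ← ENNReal.ofReal_mul (by positivity),
          ← ENNReal.ofReal_mul (by positivity)]
        congr 1
        rw [div_eq_mul_inv]
        ring
end

section
/- Let (X, d) be a metric space, μ a Borel measure on X, x ∈ X, and n ≥ 1. Assume 0 < μ(B(x,r)) < ∞ for every r > 0 and the volume doubling property at x: μ(B(x,R)) ≤ (R/r)ⁿ μ(B(x,r)) for all 0 < r ≤ R. Then for every σ ∈ (0,2) and every R > 0, ∫_{X∖B(x,R)} (2−σ) R² / (μ(B(x, d(x,z))) · d(x,z)^σ) dμ(z) ≤ 2ⁿ · (2−σ)/(1 − 2^{−σ}) · R^{2−σ}. -/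
open MeasureTheory Metric

/-- **Far-field kernel estimate** (estimate (B_R_complement) inside Lemma 2.2 of the paper):
on a metric measure space with the doubling property at `x` with exponent `n`, for every
`σ ∈ (0,2)` and `R > 0`,
`∫_{X∖B(x,R)} (2−σ) R²/(μ(B(x,d(x,z))) d(x,z)^σ) dμ(z) ≤ 2ⁿ (2−σ)/(1−2^{−σ}) R^{2−σ}`. -/
theorem kernel_farfield {X : Type*} [MetricSpace X] [MeasurableSpace X] [BorelSpace X]
    (μ : Measure X) (x : X) (n : ℕ) (hn : 1 ≤ n)
    (hpos : ∀ r : ℝ, 0 < r → 0 < μ (ball x r) ∧ μ (ball x r) < ⊤)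
    (hdoub : ∀ r R : ℝ, 0 < r → r ≤ R →
      μ (ball x R) ≤ ENNReal.ofReal ((R / r) ^ n) * μ (ball x r))
    (σ : ℝ) (hσ : σ ∈ Set.Ioo (0 : ℝ) 2) (R : ℝ) (hR : 0 < R) :
    ∫⁻ z in (ball x R)ᶜ,
        ENNReal.ofReal ((2 - σ) * R ^ 2 / dist x z ^ σ) / μ (ball x (dist x z)) ∂μ
      ≤ ENNReal.ofReal (2 ^ n * ((2 - σ) / (1 - 2 ^ (-σ))) * R ^ (2 - σ)) := by
  obtain ⟨hσ0, hσ2⟩ := hσ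
  set f : X → ENNReal := fun z =>
    ENNReal.ofReal ((2 - σ) * R ^ 2 / dist x z ^ σ) / μ (ball x (dist x z)) with hf
  set A : ℕ → Set X := fun k => ball x (2 ^ (k + 1) * R) \ ball x (2 ^ k * R) with hA
  have hrk : ∀ k : ℕ, (0 : ℝ) < 2 ^ k * R := fun k => by positivity
  -- covering
  have hcov : (ball x R)ᶜ ⊆ ⋃ k, A k := by
    intro z hz
    have hz' : R ≤ dist x z := by
      rw [dist_comm]; simpa [mem_ball, not_lt] using hz
    have hex : ∃ m : ℕ, dist x z < 2 ^ (m + 1) * R := by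
      obtain ⟨m, hm⟩ := pow_unbounded_of_one_lt (dist x z / R) (one_lt_two (α := ℝ))
      exact ⟨m, by
        have := (div_lt_iff₀ hR).mp hm
        calc dist x z < 2 ^ m * R := this
          _ ≤ 2 ^ (m + 1) * R := by
            have : (2:ℝ) ^ m ≤ 2 ^ (m+1) := by
              apply pow_le_pow_right₀ one_le_two (Nat.le_succ m)
            nlinarith⟩
    refine Set.mem_iUnion.mpr ⟨Nat.find hex, ?_, ?_⟩
    · rw [mem_ball, dist_comm]; exact Nat.find_spec hex
    · rw [mem_ball, dist_comm, not_lt]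
      rcases h : Nat.find hex with _ | m
      · simpa using hz'
      · have hm : m < Nat.find hex := by omega
        have := Nat.find_min hex hm
        simpa [not_lt] using this
  have key : ∀ k : ℕ, ∫⁻ z in A k, f z ∂μ ≤
      ENNReal.ofReal (2 ^ n) * ENNReal.ofReal ((2 - σ) * R ^ 2 / (2 ^ k * R) ^ σ) := by
    intro k
    set C : ENNReal :=
      ENNReal.ofReal ((2 - σ) * R ^ 2 / (2 ^ k * R) ^ σ) / μ (ball x (2 ^ k * R)) with hC
    have hmeas : MeasurableSet (A k) := measurableSet_ball.diff measurableSet_ball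
    have step1 : ∫⁻ z in A k, f z ∂μ ≤ C * μ (A k) := by
      rw [← setLIntegral_const (A k) C]
      refine setLIntegral_mono' hmeas fun z hz => ?_
      have hdz : 2 ^ k * R ≤ dist x z := by
        have := hz.2
        rw [mem_ball, dist_comm, not_lt] at this
        exact this
      refine ENNReal.div_le_div (ENNReal.ofReal_le_ofReal ?_)
        (measure_mono (ball_subset_ball hdz))
      apply div_le_div_of_nonneg_left (by nlinarith) (Real.rpow_pos_of_pos (hrk k) σ)
      exact Real.rpow_le_rpow (hrk k).le hdz hσ0.le
    have step2 : μ (A k) ≤ ENNReal.ofReal (2 ^ n) * μ (ball x (2 ^ k * R)) := by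
      have := hdoub (2 ^ k * R) (2 ^ (k + 1) * R) (hrk k) (by
        have : (2:ℝ) ^ k ≤ 2 ^ (k+1) := pow_le_pow_right₀ one_le_two (Nat.le_succ k)
        nlinarith)
      have hrat : (2 ^ (k + 1) * R / (2 ^ k * R)) = (2 : ℝ) := by
        rw [pow_succ]; field_simp
      calc μ (A k) ≤ μ (ball x (2 ^ (k + 1) * R)) := measure_mono Set.diff_subset
        _ ≤ ENNReal.ofReal (2 ^ n) * μ (ball x (2 ^ k * R)) := by
            rw [hrat] at this; exact this
    have hb0 : μ (ball x (2 ^ k * R)) ≠ 0 := (hpos _ (hrk k)).1.ne'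
    have hbt : μ (ball x (2 ^ k * R)) ≠ ⊤ := (hpos _ (hrk k)).2.ne
    calc ∫⁻ z in A k, f z ∂μ ≤ C * μ (A k) := step1
      _ ≤ C * (ENNReal.ofReal (2 ^ n) * μ (ball x (2 ^ k * R))) :=
          mul_le_mul_right step2 C
      _ = ENNReal.ofReal (2 ^ n) *
          (ENNReal.ofReal ((2 - σ) * R ^ 2 / (2 ^ k * R) ^ σ) / μ (ball x (2 ^ k * R))
            * μ (ball x (2 ^ k * R))) := by rw [hC]; ring
      _ = ENNReal.ofReal (2 ^ n) * ENNReal.ofReal ((2 - σ) * R ^ 2 / (2 ^ k * R) ^ σ) := by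
          rw [ENNReal.div_mul_cancel hb0 hbt]
  -- per-term rewrite
  have hterm : ∀ k : ℕ, ENNReal.ofReal (2 ^ n) * ENNReal.ofReal ((2 - σ) * R ^ 2 / (2 ^ k * R) ^ σ)
      = ENNReal.ofReal (2 ^ n * (2 - σ) * R ^ (2 - σ)) * ENNReal.ofReal (2 ^ (-σ)) ^ k := by
    intro k
    have h2σ : (0:ℝ) ≤ 2 - σ := by linarith
    have e1 : ((2:ℝ) ^ k * R) ^ σ = 2 ^ (σ * (k:ℝ)) * R ^ σ := by
      rw [Real.mul_rpow (by positivity) hR.le, ← Real.rpow_natCast (2:ℝ) k,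
        ← Real.rpow_mul (by norm_num : (0:ℝ) ≤ 2), mul_comm (k:ℝ) σ]
    have e2 : R ^ (2:ℕ) = R ^ (2 - σ) * R ^ σ := by
      rw [← Real.rpow_natCast R 2, ← Real.rpow_add hR]; norm_num
    have e3 : ((2:ℝ) ^ (-σ)) ^ k = (2 ^ (σ * (k:ℝ)))⁻¹ := by
      rw [← Real.rpow_natCast ((2:ℝ) ^ (-σ)) k,
        ← Real.rpow_mul (by norm_num : (0:ℝ) ≤ 2), neg_mul,
        Real.rpow_neg (by norm_num : (0:ℝ) ≤ 2)]
    have h2k : (0:ℝ) < 2 ^ (σ * (k:ℝ)) := Real.rpow_pos_of_pos two_pos _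
    have hRσ : (0:ℝ) < R ^ σ := Real.rpow_pos_of_pos hR σ
    have hreal : (2 - σ) * R ^ 2 / (2 ^ k * R) ^ σ
        = ((2 - σ) * R ^ (2 - σ)) * ((2:ℝ) ^ (-σ)) ^ k := by
      rw [e1, e2, e3]
      field_simp
    have hnn : (0:ℝ) ≤ 2 ^ n * (2 - σ) * R ^ (2 - σ) :=
      mul_nonneg (mul_nonneg (by positivity) h2σ) (by positivity)
    rw [hreal, ← ENNReal.ofReal_mul (show (0:ℝ) ≤ 2 ^ n by positivity),
      ← ENNReal.ofReal_pow (by positivity : (0:ℝ) ≤ (2:ℝ) ^ (-σ)),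
      ← ENNReal.ofReal_mul hnn]
    congr 1
    ring
  have hgeo : ∑' k : ℕ, ENNReal.ofReal (2 ^ (-σ)) ^ k
      = ENNReal.ofReal ((1 - 2 ^ (-σ))⁻¹) := by
    rw [ENNReal.tsum_geometric]
    have h1 : (2:ℝ) ^ (-σ) < 1 :=
      Real.rpow_lt_one_of_one_lt_of_neg one_lt_two (neg_lt_zero.mpr hσ0)
    rw [← ENNReal.ofReal_one, ← ENNReal.ofReal_sub _ (by positivity),
      ← ENNReal.ofReal_inv_of_pos (by linarith)]
  calc ∫⁻ z in (ball x R)ᶜ, f z ∂μ ≤ ∫⁻ z in ⋃ k, A k, f z ∂μ := lintegral_mono_set hcov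
    _ ≤ ∑' k : ℕ, ∫⁻ z in A k, f z ∂μ := lintegral_iUnion_le _ _
    _ ≤ ∑' k : ℕ, ENNReal.ofReal (2 ^ n) * ENNReal.ofReal ((2 - σ) * R ^ 2 / (2 ^ k * R) ^ σ) :=
        ENNReal.tsum_le_tsum key
    _ = ∑' k : ℕ, ENNReal.ofReal (2 ^ n * (2 - σ) * R ^ (2 - σ)) * ENNReal.ofReal (2 ^ (-σ)) ^ k := by
        simp_rw [hterm]
    _ = ENNReal.ofReal (2 ^ n * (2 - σ) * R ^ (2 - σ)) * ENNReal.ofReal ((1 - 2 ^ (-σ))⁻¹) := by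
        rw [ENNReal.tsum_mul_left, hgeo]
    _ = ENNReal.ofReal (2 ^ n * ((2 - σ) / (1 - 2 ^ (-σ))) * R ^ (2 - σ)) := by
        have h2σ : (0:ℝ) ≤ 2 - σ := by linarith
        have hnn : (0:ℝ) ≤ 2 ^ n * (2 - σ) * R ^ (2 - σ) :=
          mul_nonneg (mul_nonneg (by positivity) h2σ) (by positivity)
        rw [← ENNReal.ofReal_mul hnn]
        congr 1
        rw [div_eq_mul_inv]
        ring
end

section
/- Let (X, d) be a metric space, μ a Borel measure on X, x ∈ X, and n ≥ 1. Assume 0 < μ(B(x,s)) < ∞ for every s > 0 and the volume doubling property at x: μ(B(x,2s)) ≤ 2ⁿ μ(B(x,s)) for all s > 0. Then for every σ ∈ (0,2), every α with 0 < α < σ, and every r > 0, ∫_{X∖B(x,r)} ((d(x,z)/r)^α − 1) / (μ(B(x, d(x,z))) · d(x,z)^σ) dμ(z) ≤ 2ⁿ (2^α − 1) / ((1 − 2^{α−σ})(1 − 2^{−σ})) · r^{−σ}. In particular, for fixed σ₀ ∈ (0,2) and σ ∈ [σ₀,2), α ∈ (0,σ₀), the constant is at most 2ⁿ(2^α−1)/((1−2^{α−σ₀})(1−2^{−σ₀})),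 which tends to 0 as α → 0. -/
open MeasureTheory Metric

/-- **Tail estimate for the Hölder growth barrier** (proved inside Lemma 7.1 of the paper):
on a metric measure space with the doubling property `μ(B(x,2s)) ≤ 2ⁿ μ(B(x,s))` at `x`,
for every `σ ∈ (0,2)`, `0 < α < σ` and `r > 0`,
`∫_{X∖B(x,r)} ((d(x,z)/r)^α − 1)/(μ(B(x,d(x,z))) d(x,z)^σ) dμ(z)
  ≤ 2ⁿ (2^α − 1)/((1 − 2^{α−σ})(1 − 2^{−σ})) r^{−σ}`. -/
theorem tail_estimate {X : Type*} [MetricSpace X] [MeasurableSpace X] [BorelSpace X]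
    (μ : Measure X) (x : X) (n : ℕ) (hn : 1 ≤ n)
    (hpos : ∀ s : ℝ, 0 < s → 0 < μ (ball x s) ∧ μ (ball x s) < ⊤)
    (hdoub : ∀ s : ℝ, 0 < s → μ (ball x (2 * s)) ≤ 2 ^ n * μ (ball x s))
    (σ : ℝ) (hσ : σ ∈ Set.Ioo (0 : ℝ) 2) (α : ℝ) (hα : 0 < α) (hασ : α < σ)
    (r : ℝ) (hr : 0 < r) :
    ∫⁻ z in (ball x r)ᶜ,
        ENNReal.ofReal (((dist x z / r) ^ α - 1) / dist x z ^ σ) / μ (ball x (dist x z)) ∂μ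
      ≤ ENNReal.ofReal (2 ^ n * (2 ^ α - 1) / ((1 - 2 ^ (α - σ)) * (1 - 2 ^ (-σ))) * r ^ (-σ)) := by
  obtain ⟨hσ0, hσ2⟩ := hσ
  set q1 : ℝ := (2:ℝ) ^ (α - σ) with hq1
  set q2 : ℝ := (2:ℝ) ^ (-σ) with hq2
  have hq1_pos : 0 < q1 := Real.rpow_pos_of_pos two_pos _
  have hq1_lt : q1 < 1 := Real.rpow_lt_one_of_one_lt_of_neg one_lt_two (by linarith)
  have hq2_pos : 0 < q2 := Real.rpow_pos_of_pos two_pos _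
  have hq2_lt : q2 < 1 := Real.rpow_lt_one_of_one_lt_of_neg one_lt_two (by linarith)
  set F : X → ENNReal := fun z =>
    ENNReal.ofReal (((dist x z / r) ^ α - 1) / dist x z ^ σ) / μ (ball x (dist x z)) with hF
  set A : ℕ → Set X := fun j => ball x (2 ^ (j+1) * r) \ ball x (2 ^ j * r) with hA
  set c : ℕ → ℝ := fun j => (((2:ℝ) ^ (j+1)) ^ α - 1) / ((2:ℝ) ^ j * r) ^ σ with hc
  -- covering
  have hcover : (ball x r)ᶜ ⊆ ⋃ j, A j := by
    intro z hz
    simp only [Set.mem_compl_iff, mem_ball, not_lt] at hz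
    obtain ⟨N, hN⟩ := pow_unbounded_of_one_lt (dist z x / r) (one_lt_two (α := ℝ))
    have hN' : dist z x < 2 ^ N * r := by
      rw [div_lt_iff₀ hr] at hN; linarith
    have hex : ∃ m, dist z x < 2 ^ m * r := ⟨N, hN'⟩
    set k := Nat.find hex with hk
    have hkspec : dist z x < 2 ^ k * r := Nat.find_spec hex
    have hk0 : k ≠ 0 := by
      intro h0
      have := hkspec
      rw [h0] at this
      simp at this; linarith
    obtain ⟨j, hj⟩ : ∃ j, k = j + 1 := ⟨k - 1, (Nat.succ_pred_eq_of_pos (Nat.pos_of_ne_zero hk0)).symm⟩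
    have hmin : ¬ dist z x < 2 ^ j * r := Nat.find_min hex (by omega)
    refine Set.mem_iUnion.2 ⟨j, ?_, ?_⟩
    · rw [mem_ball]; rw [hj] at hkspec; exact hkspec
    · rw [mem_ball]; exact hmin
  -- per-annulus bound
  have hbound : ∀ j : ℕ, ∫⁻ z in A j, F z ∂μ ≤ (2:ENNReal) ^ n * ENNReal.ofReal (c j) := by
    intro j
    have hrj : 0 < (2:ℝ) ^ j * r := by positivity
    have hrj1 : 0 < (2:ℝ) ^ (j+1) * r := by positivity
    obtain ⟨hmj0, hmjtop⟩ := hpos _ hrj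
    set m := μ (ball x (2 ^ j * r)) with hm
    have hpt : ∀ z ∈ A j, F z ≤ ENNReal.ofReal (c j) / m := by
      intro z hz
      obtain ⟨hz1, hz2⟩ := hz
      rw [mem_ball] at hz1
      simp only [mem_ball, not_lt] at hz2
      have hd : dist x z = dist z x := dist_comm x z
      have hdl : 2 ^ j * r ≤ dist x z := by rw [hd]; exact hz2
      have hdu : dist x z < 2 ^ (j+1) * r := by rw [hd]; exact hz1
      have hdpos : 0 < dist x z := lt_of_lt_of_le hrj hdl
      refine ENNReal.div_le_div (ENNReal.ofReal_le_ofReal ?_) (measure_mono (ball_subset_ball hdl))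
      have h1 : (dist x z / r) ^ α ≤ ((2:ℝ) ^ (j+1)) ^ α := by
        apply Real.rpow_le_rpow (by positivity)
        · rw [div_le_iff₀ hr]; linarith
        · exact hα.le
      have h2 : ((2:ℝ) ^ j * r) ^ σ ≤ dist x z ^ σ :=
        Real.rpow_le_rpow hrj.le hdl hσ0.le
      have hnum : 0 ≤ ((2:ℝ) ^ (j+1)) ^ α - 1 := by
        have h21 : (1:ℝ) ≤ 2 ^ (j+1) := one_le_pow₀ one_le_two
        have : (1:ℝ) ^ α ≤ ((2:ℝ) ^ (j+1)) ^ α :=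
          Real.rpow_le_rpow zero_le_one h21 hα.le
        rw [Real.one_rpow] at this; linarith
      exact div_le_div₀ hnum (by linarith) (Real.rpow_pos_of_pos hrj _) h2
    calc ∫⁻ z in A j, F z ∂μ ≤ ∫⁻ _ in A j, ENNReal.ofReal (c j) / m ∂μ :=
          setLIntegral_mono measurable_const hpt
      _ = ENNReal.ofReal (c j) / m * μ (A j) := setLIntegral_const _ _
      _ ≤ ENNReal.ofReal (c j) / m * ((2:ENNReal) ^ n * m) := by
          gcongr
          calc μ (A j) ≤ μ (ball x (2 ^ (j+1) * r)) := measure_mono Set.diff_subset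
            _ = μ (ball x (2 * (2 ^ j * r))) := by ring_nf
            _ ≤ 2 ^ n * m := hdoub _ hrj
      _ = (2:ENNReal) ^ n * (ENNReal.ofReal (c j) / m * m) := by ring
      _ = (2:ENNReal) ^ n * ENNReal.ofReal (c j) := by
          rw [ENNReal.div_mul_cancel hmj0.ne' hmjtop.ne]
  -- rewrite c j in geometric form
  have hceq : ∀ j : ℕ, c j = r ^ (-σ) * ((2:ℝ) ^ α * q1 ^ j - q2 ^ j) := by
    intro j
    have e1 : ((2:ℝ) ^ (j+1) : ℝ) ^ α = (2:ℝ) ^ (((j:ℝ)+1) * α) := by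
      rw [Real.rpow_mul (by norm_num : (0:ℝ) ≤ 2),
        show ((j:ℝ)+1) = ((j+1:ℕ):ℝ) by push_cast; ring, Real.rpow_natCast]
    have e2 : ((2:ℝ) ^ j * r) ^ σ = (2:ℝ) ^ ((j:ℝ) * σ) * r ^ σ := by
      rw [Real.mul_rpow (by positivity) hr.le, Real.rpow_mul (by norm_num),
        Real.rpow_natCast 2 j]
    have e3 : q1 ^ j = (2:ℝ) ^ ((α - σ) * (j:ℝ)) := by
      rw [Real.rpow_mul (by norm_num), ← Real.rpow_natCast (2 ^ (α - σ)) j]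
    have e4 : q2 ^ j = (2:ℝ) ^ ((-σ) * (j:ℝ)) := by
      rw [Real.rpow_mul (by norm_num), ← Real.rpow_natCast (2 ^ (-σ)) j]
    simp only [hc]
    rw [e1, e2, e3, e4, Real.rpow_neg hr.le]
    have h2jσ : (0:ℝ) < (2:ℝ) ^ ((j:ℝ) * σ) := Real.rpow_pos_of_pos two_pos _
    have hrσ : (0:ℝ) < r ^ σ := Real.rpow_pos_of_pos hr _
    field_simp
    have ea : (2:ℝ)^α * 2^((α-σ)*(j:ℝ)) * 2^((j:ℝ)*σ) = 2^(((j:ℝ)+1)*α) := by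
      rw [mul_assoc, ← Real.rpow_add two_pos, ← Real.rpow_add two_pos]
      congr 1; ring
    have eb : (2:ℝ)^(-(σ*(j:ℝ))) * 2^((j:ℝ)*σ) = 1 := by
      rw [← Real.rpow_add two_pos, show -(σ*(j:ℝ)) + (j:ℝ)*σ = 0 by ring, Real.rpow_zero]
    have ea' : (2:ℝ)^α * 2^((j:ℝ)*σ) * 2^((j:ℝ)*(α-σ)) = 2^(((j:ℝ)+1)*α) := by
      rw [mul_assoc, ← Real.rpow_add two_pos, ← Real.rpow_add two_pos]
      congr 1; ring
    have eb' : (2:ℝ)^((j:ℝ)*σ) * 2^(-((j:ℝ)*σ)) = 1 := by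
      rw [← Real.rpow_add two_pos, add_neg_cancel, Real.rpow_zero]
    linear_combination eb' - ea'
  -- summability
  have hs1 : Summable fun j : ℕ => q1 ^ j := summable_geometric_of_lt_one hq1_pos.le hq1_lt
  have hs2 : Summable fun j : ℕ => q2 ^ j := summable_geometric_of_lt_one hq2_pos.le hq2_lt
  have hsum : Summable c := by
    apply Summable.congr (((hs1.mul_left ((2:ℝ) ^ α)).sub hs2).mul_left (r ^ (-σ)))
    intro j; exact (hceq j).symm
  have hcnn : ∀ j, 0 ≤ c j := by
    intro j
    apply div_nonneg _ (Real.rpow_nonneg (by positivity) _)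
    have h21 : (1:ℝ) ≤ 2 ^ (j+1) := one_le_pow₀ one_le_two
    have : (1:ℝ) ^ α ≤ ((2:ℝ) ^ (j+1)) ^ α :=
      Real.rpow_le_rpow zero_le_one h21 hα.le
    rw [Real.one_rpow] at this; linarith
  -- sum the series
  have hkey : (2:ℝ) ^ α * q2 = q1 := by
    rw [hq1, hq2, ← Real.rpow_add two_pos]; ring_nf
  have htsum : ∑' j, c j = r ^ (-σ) * (((2:ℝ) ^ α - 1) / ((1 - q1) * (1 - q2))) := by
    have := funext hceq
    rw [this]
    rw [tsum_mul_left]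
    congr 1
    rw [Summable.tsum_sub (hs1.mul_left _) hs2, tsum_mul_left,
      tsum_geometric_of_lt_one hq1_pos.le hq1_lt, tsum_geometric_of_lt_one hq2_pos.le hq2_lt]
    have h1 : (1:ℝ) - q1 ≠ 0 := by linarith
    have h2 : (1:ℝ) - q2 ≠ 0 := by linarith
    field_simp
    linear_combination -hkey
  -- put things together
  calc ∫⁻ z in (ball x r)ᶜ, F z ∂μ ≤ ∫⁻ z in ⋃ j, A j, F z ∂μ := lintegral_mono_set hcover
    _ ≤ ∑' j, ∫⁻ z in A j, F z ∂μ := lintegral_iUnion_le _ _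
    _ ≤ ∑' j, (2:ENNReal) ^ n * ENNReal.ofReal (c j) := ENNReal.tsum_le_tsum hbound
    _ = (2:ENNReal) ^ n * ∑' j, ENNReal.ofReal (c j) := ENNReal.tsum_mul_left
    _ = (2:ENNReal) ^ n * ENNReal.ofReal (∑' j, c j) := by
        rw [ENNReal.ofReal_tsum_of_nonneg hcnn hsum]
    _ = ENNReal.ofReal ((2:ℝ) ^ n * ∑' j, c j) := by
        rw [ENNReal.ofReal_mul (by positivity), ENNReal.ofReal_pow (by norm_num),
          ENNReal.ofReal_ofNat]
    _ ≤ ENNReal.ofReal (2 ^ n * (2 ^ α - 1) / ((1 - q1) * (1 - q2)) * r ^ (-σ)) := by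
        apply ENNReal.ofReal_le_ofReal
        rw [htsum]; apply le_of_eq; ring
end
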